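/- arXiv:1108.1823 — 4 statements merged into one kernel-verified Lean document; each statement's English description precedes it below -/
import Mathlib

section
/- Let R be a commutative ℚ-algebra, let k be a nonnegative integer and let a, b, c ∈ R. Then the determinant of the matrix A^k(a,b,c) equals the product ∏_{i=1}^{k} C(a+b+i, i). In particular, the determinant does not depend on c. -/
/-- Generalized binomial coefficient `C(x, p) = (1/p!) ∏_{j=0}^{p-1} (x - j)`
in a commutative `ℚ`-algebra. -/
noncomputable def gchoose {R : Type*} [CommRing R] [Algebra ℚ R] (x : R) (p : ℕ) : R :=
  algebraMap ℚ R (1 / p.factorial) * ∏ j ∈ Finset.range p, (x - (j : R))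

/-- The `(k+2) × (k+2)` matrix `A^k(a,b,c)`: for `0 ≤ p ≤ k` the `(p,q)` entry is
`C(q+a, p) * C(k-q+b, k-p)`, and the `(k+1, q)` entry is `C(q+c, k+1)`. -/
noncomputable def matA {R : Type*} [CommRing R] [Algebra ℚ R] (k : ℕ) (a b c : R) :
    Matrix (Fin (k + 2)) (Fin (k + 2)) R :=
  fun p q =>
    if (p : ℕ) ≤ k then
      gchoose ((q : ℕ) + a) (p : ℕ) * gchoose ((k : R) - (q : ℕ) + b) (k - (p : ℕ))
    else
      gchoose ((q : ℕ) + c) (k + 1)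


open Polynomial Finset Matrix

namespace DetAux

set_option linter.unusedSectionVars false

variable {R : Type*} [CommRing R] [Algebra ℚ R]

noncomputable def gcPoly (R : Type*) [CommRing R] [Algebra ℚ R] (p : ℕ) : Polynomial R :=
  Polynomial.C (algebraMap ℚ R (1 / p.factorial)) *
    ∏ j ∈ Finset.range p, (Polynomial.X - Polynomial.C (j : R))

lemma gcPoly_eval (x : R) (p : ℕ) : (gcPoly R p).eval x = gchoose x p := by
  rw [gcPoly, gchoose, Polynomial.eval_mul, Polynomial.eval_C, Polynomial.eval_prod]
  congr 1
  exact Finset.prod_congr rfl fun j _ => by rw [Polynomial.eval_sub, Polynomial.eval_X, Polynomial.eval_C]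

lemma natDegree_gcPoly (p : ℕ) : (gcPoly R p).natDegree ≤ p := by
  refine Polynomial.natDegree_mul_le.trans ?_
  simp only [Polynomial.natDegree_C, zero_add]
  refine (Polynomial.natDegree_prod_le _ _).trans ?_
  refine le_trans (Finset.sum_le_sum fun i _ => Polynomial.natDegree_X_sub_C_le (i:R)) ?_
  simp

@[simp] lemma gchoose_zero (x : R) : gchoose x 0 = 1 := by simp [gchoose]

lemma fact_mul_inv_fact (m : ℕ) :
    ((m.factorial : ℕ) : R) * algebraMap ℚ R (1 / m.factorial) = 1 := by
  rw [show ((m.factorial : ℕ) : R) = algebraMap ℚ R ((m.factorial : ℕ) : ℚ) by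
    rw [map_natCast], ← _root_.map_mul]
  rw [mul_one_div, div_self (by exact_mod_cast m.factorial_ne_zero), _root_.map_one]

lemma gchoose_succ (x : R) (m : ℕ) :
    ((m : R) + 1) * gchoose x (m + 1) = (x - (m : R)) * gchoose x m := by
  have key : ((m:R)+1) * algebraMap ℚ R (1/(m+1).factorial) = algebraMap ℚ R (1/m.factorial) := by
    rw [show ((m:R)+1) = algebraMap ℚ R ((m:ℚ)+1) by push_cast; simp, ← _root_.map_mul]
    congr 1
    rw [Nat.factorial_succ]
    have h1 : ((m.factorial : ℚ)) ≠ 0 := by exact_mod_cast m.factorial_ne_zero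
    have h2 : ((m:ℚ)+1) ≠ 0 := by positivity
    push_cast
    field_simp
  rw [gchoose, gchoose, Finset.prod_range_succ, ← key]
  ring



lemma coeff_shift (n : ℕ) (P : Polynomial R) (hP : P.natDegree ≤ n + 1) (m : ℕ) :
    (P.comp (Polynomial.X + Polynomial.C 1)).coeff m
      = ∑ i ∈ Finset.range (n+2), P.coeff i * (i.choose m : R) := by
  conv_lhs => rw [P.as_sum_range' (n+2) (by omega)]
  rw [show ((∑ i ∈ Finset.range (n+2), Polynomial.monomial i (P.coeff i)).comp
      (Polynomial.X + Polynomial.C 1))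
    = ∑ i ∈ Finset.range (n+2), (Polynomial.monomial i (P.coeff i)).comp
      (Polynomial.X + Polynomial.C 1) from by
        simp [Polynomial.comp, Polynomial.eval₂_finset_sum]]
  rw [Polynomial.finset_sum_coeff]
  refine Finset.sum_congr rfl fun i _ => ?_
  rw [Polynomial.monomial_comp, Polynomial.coeff_C_mul, Polynomial.C_1,
    Polynomial.coeff_X_add_one_pow]

lemma FD (n : ℕ) : ∀ P : Polynomial R, P.natDegree ≤ n →
    ∑ q ∈ Finset.range (n+1), (-1:R)^(n+q) * (n.choose q : R) * P.eval (q : R)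
      = (n.factorial : R) * P.coeff n := by
  induction n with
  | zero =>
    intro P _
    simp [Polynomial.coeff_zero_eq_eval_zero]
  | succ n ih =>
    intro P hP
    set Q : Polynomial R := P.comp (Polynomial.X + Polynomial.C 1) - P with hQdef
    have hcoeff : ∀ m, Q.coeff m
        = (∑ i ∈ Finset.range (n+2), P.coeff i * (i.choose m : R)) - P.coeff m := by
      intro m
      rw [hQdef, Polynomial.coeff_sub, coeff_shift n P hP]
    have hsum_ite : ∀ m, n < m →
        (∑ i ∈ Finset.range (n+2), P.coeff i * (i.choose m : R))
          = if m ∈ Finset.range (n+2) then P.coeff m else 0 := by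
      intro m hm
      rw [← Finset.sum_ite_eq' (Finset.range (n+2)) m (fun i => P.coeff i)]
      refine Finset.sum_congr rfl fun i hi => ?_
      by_cases h : i = m
      · subst h; simp
      · have hi' : i < n + 2 := Finset.mem_range.mp hi
        have : i < m := by omega
        rw [if_neg h, Nat.choose_eq_zero_of_lt this]
        simp
    have hQdeg : Q.natDegree ≤ n := by
      rw [Polynomial.natDegree_le_iff_coeff_eq_zero]
      intro m hm
      rw [hcoeff, hsum_ite m hm]
      by_cases h : m ∈ Finset.range (n+2)
      · rw [if_pos h]; ring
      · rw [if_neg h]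
        have : P.coeff m = 0 := Polynomial.coeff_eq_zero_of_natDegree_lt
          (by have := Finset.mem_range.not.mp h; omega)
        rw [this]; ring
    have hQn : Q.coeff n = ((n:R) + 1) * P.coeff (n+1) := by
      rw [hcoeff, Finset.sum_range_succ, Finset.sum_range_succ]
      have h0 : ∑ i ∈ Finset.range n, P.coeff i * (i.choose n : R) = 0 := by
        refine Finset.sum_eq_zero fun i hi => ?_
        rw [Nat.choose_eq_zero_of_lt (Finset.mem_range.mp hi)]
        simp
      rw [h0, Nat.choose_self, Nat.choose_succ_self_right]
      push_cast
      ring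
    have hQev : ∀ q : ℕ, Q.eval (q:R) = P.eval ((q:R) + 1) - P.eval (q:R) := by
      intro q
      rw [hQdef]
      simp [Polynomial.eval_comp]
    -- sum manipulation : S_{n+1}(P) = S_n(Q)
    have key : ∑ q ∈ Finset.range (n+2), (-1:R)^(n+1+q) * ((n+1).choose q : R) * P.eval (q : R)
        = ∑ q ∈ Finset.range (n+1), (-1:R)^(n+q) * (n.choose q : R) * Q.eval (q : R) := by
      rw [Finset.sum_range_succ']
      have hterm : ∀ q, (-1:R)^(n+1+(q+1)) * ((n+1).choose (q+1) : R) * P.eval ((q+1 : ℕ) : R)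
          = (-1:R)^(n+q) * (n.choose q : R) * P.eval ((q:R)+1)
            + (-1:R)^(n+q) * (n.choose (q+1) : R) * P.eval ((q:R)+1) := by
        intro q
        rw [Nat.choose_succ_succ]
        have hpow : (-1:R)^(n+1+(q+1)) = (-1:R)^(n+q) := by
          rw [show n+1+(q+1) = (n+q)+2 by omega, pow_add]
          ring
        rw [hpow]
        push_cast
        ring
      rw [Finset.sum_congr rfl fun q _ => hterm q]
      rw [Finset.sum_add_distrib]
      -- second piece
      have hB : ∑ q ∈ Finset.range (n+1), (-1:R)^(n+q) * (n.choose (q+1) : R) * P.eval ((q:R)+1)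
          = -(∑ q ∈ Finset.range (n+1), (-1:R)^(n+q) * (n.choose q : R) * P.eval (q:R))
            + (-1:R)^n * P.eval 0 := by
        rw [Finset.sum_range_succ, Nat.choose_succ_self]
        push_cast
        rw [Finset.sum_range_succ' (fun q => (-1:R)^(n+q) * (n.choose q : R) * P.eval (q:R)) n]
        have : ∀ q, -((-1:R)^(n+(q+1)) * (n.choose (q+1) : R) * P.eval ((q+1:ℕ):R))
            = (-1:R)^(n+q) * (n.choose (q+1) : R) * P.eval ((q:R)+1) := by
          intro q
          rw [show n+(q+1) = (n+q)+1 by omega, pow_succ]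
          push_cast
          ring
        rw [neg_add, ← Finset.sum_neg_distrib]
        rw [Finset.sum_congr rfl fun q _ => this q]
        simp
      rw [hB]
      have hC : ∀ q, (-1:R)^(n+q) * (n.choose q : R) * Q.eval (q:R)
          = (-1:R)^(n+q) * (n.choose q : R) * P.eval ((q:R)+1)
            - (-1:R)^(n+q) * (n.choose q : R) * P.eval (q:R) := by
        intro q; rw [hQev]; ring
      rw [Finset.sum_congr rfl fun q _ => hC q, Finset.sum_sub_distrib]
      have hpow0 : (-1:R)^(n+1+0) = -(-1:R)^n := by rw [pow_succ]; ring
      rw [hpow0, Nat.choose_zero_right]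
      push_cast
      ring
    rw [key, ih Q hQdeg, hQn, Nat.factorial_succ]
    push_cast
    ring


lemma detB (n : ℕ) (M : Matrix (Fin (n+1)) (Fin (n+1)) R)
    (h1 : ∀ p : Fin (n+1), p ≠ Fin.last n →
      ∑ q : Fin (n+1), (-1:R)^(n+(q:ℕ)) * (n.choose (q:ℕ) : R) * M p q = 0)
    (h2 : ∑ q : Fin (n+1), (-1:R)^(n+(q:ℕ)) * (n.choose (q:ℕ) : R) * M (Fin.last n) q = 1) :
    M.det = (M.submatrix Fin.castSucc Fin.castSucc).det := by
  classical
  set v : Fin (n+1) → R := fun q => (-1:R)^(n+(q:ℕ)) * (n.choose (q:ℕ) : R) with hv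
  set E : Matrix (Fin (n+1)) (Fin (n+1)) R :=
    (1 : Matrix (Fin (n+1)) (Fin (n+1)) R).updateCol (Fin.last n) v with hE
  have hvlast : v (Fin.last n) = 1 := by
    rw [hv]
    simp only [Fin.val_last, Nat.choose_self, Nat.cast_one, mul_one]
    exact Even.neg_one_pow ⟨n, by ring⟩
  have hdetE : E.det = 1 := by
    have ht : E.BlockTriangular id := by
      intro i j hij
      have hj : j ≠ Fin.last n := Fin.ne_last_of_lt hij
      rw [hE, Matrix.updateCol_apply, if_neg hj]
      exact Matrix.one_apply_ne (ne_of_gt hij)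
    rw [Matrix.det_of_upperTriangular ht]
    have hdiag : ∀ i : Fin (n+1), E i i = if i = Fin.last n then v i else 1 := by
      intro i
      rw [hE, Matrix.updateCol_apply]
      by_cases h : i = Fin.last n
      · rw [if_pos h, if_pos h]
      · rw [if_neg h, if_neg h, Matrix.one_apply_eq]
    rw [Finset.prod_congr rfl fun i _ => hdiag i, Finset.prod_ite_eq' Finset.univ (Fin.last n) v]
    rw [if_pos (Finset.mem_univ _), hvlast]
  have hcol : ∀ p q, (M * E) p q = if q = Fin.last n then (if p = Fin.last n then 1 else 0)
      else M p q := by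
    intro p q
    rw [Matrix.mul_apply]
    by_cases h : q = Fin.last n
    · subst h
      rw [if_pos rfl]
      have : ∀ r, M p r * E r (Fin.last n) = v r * M p r := by
        intro r
        rw [hE, Matrix.updateCol_apply, if_pos rfl]
        ring
      rw [Finset.sum_congr rfl fun r _ => this r]
      by_cases hp : p = Fin.last n
      · subst hp; rw [if_pos rfl]; exact h2
      · rw [if_neg hp]; exact h1 p hp
    · rw [if_neg h]
      have : ∀ r, M p r * E r q = if r = q then M p r else 0 := by
        intro r
        rw [hE, Matrix.updateCol_apply, if_neg h, Matrix.one_apply]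
        by_cases hr : r = q
        · rw [if_pos hr, if_pos hr, mul_one]
        · rw [if_neg hr, if_neg hr, mul_zero]
      rw [Finset.sum_congr rfl fun r _ => this r, Finset.sum_ite_eq' Finset.univ q,
        if_pos (Finset.mem_univ _)]
  have hdet : M.det = (M * E).det := by rw [Matrix.det_mul, hdetE, mul_one]
  rw [hdet, Matrix.det_succ_column (M * E) (Fin.last n)]
  have hzero : ∀ i : Fin (n+1), i ≠ Fin.last n →
      (-1:R)^((i:ℕ)+((Fin.last n : Fin (n+1)):ℕ)) * (M * E) i (Fin.last n) *
        ((M * E).submatrix i.succAbove (Fin.last n).succAbove).det = 0 := by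
    intro i hi
    rw [hcol, if_pos rfl, if_neg hi]
    ring
  rw [Finset.sum_eq_single_of_mem (Fin.last n) (Finset.mem_univ _)
    (fun i _ hi => hzero i hi)]
  rw [hcol, if_pos rfl, if_pos rfl, Fin.succAbove_last, Fin.val_last]
  have hpow : (-1:R)^(n+n) = 1 := Even.neg_one_pow ⟨n, by ring⟩
  simp only [hpow, one_mul, mul_one]
  congr 1
  ext p q
  rw [Matrix.submatrix_apply, Matrix.submatrix_apply, hcol,
    if_neg (Fin.ne_last_of_lt (Fin.castSucc_lt_last q))]



lemma coeff_gcPoly_comp (m : ℕ) (c : R) :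
    ((gcPoly R m).comp (Polynomial.X + Polynomial.C c)).coeff m
      = algebraMap ℚ R (1 / m.factorial) := by
  nontriviality R
  have h : (gcPoly R m).comp (Polynomial.X + Polynomial.C c)
      = Polynomial.C (algebraMap ℚ R (1 / m.factorial)) *
        ∏ j ∈ Finset.range m, (Polynomial.X + Polynomial.C (c - (j:R))) := by
    rw [gcPoly, Polynomial.mul_comp, Polynomial.C_comp, Polynomial.prod_comp]
    congr 1
    refine Finset.prod_congr rfl fun j _ => ?_
    rw [Polynomial.sub_comp, Polynomial.X_comp, Polynomial.C_comp, Polynomial.C_sub]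
    ring
  rw [h, Polynomial.coeff_C_mul]
  have hmonic : ∀ j ∈ Finset.range m, (Polynomial.X + Polynomial.C (c - (j:R))).Monic :=
    fun j _ => Polynomial.monic_X_add_C _
  have hprod := Polynomial.monic_prod_of_monic _ _ hmonic
  have hdeg : (∏ j ∈ Finset.range m, (Polynomial.X + Polynomial.C (c - (j:R)))).natDegree = m := by
    rw [Polynomial.natDegree_prod_of_monic _ _ hmonic]
    simp only [Polynomial.natDegree_X_add_C]
    simp
  have hc := hprod.coeff_natDegree
  rw [hdeg] at hc
  rw [hc, mul_one]


noncomputable def matN (k : ℕ) (a b : R) : Matrix (Fin (k+1)) (Fin (k+1)) R :=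
  fun p q => gchoose ((q:ℕ) + a) (p:ℕ) * gchoose ((k : R) - ((q:ℕ):R) + b) (k - (p:ℕ))

lemma det_matA_eq_matN (k : ℕ) (a b c : R) :
    (matA k a b c).det = (matN k a b).det := by
  have hXa : (Polynomial.X + Polynomial.C a).natDegree ≤ 1 := by
    refine (Polynomial.natDegree_add_le _ _).trans ?_
    simp [Polynomial.natDegree_X_le]
  have hXb : (Polynomial.C ((k:R)+b) - Polynomial.X).natDegree ≤ 1 := by
    refine (Polynomial.natDegree_sub_le _ _).trans ?_
    simp [Polynomial.natDegree_X_le]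
  have hmain := detB (k+1) (matA k a b c) ?_ ?_
  · rw [hmain]
    congr 1
    ext p q
    have hp : (p:ℕ) ≤ k := by omega
    rw [Matrix.submatrix_apply]
    show matA k a b c p.castSucc q.castSucc = matN k a b p q
    rw [matA, matN]
    simp only [Fin.coe_castSucc]
    rw [if_pos hp]
  · -- h1 : rows p ≤ k
    intro p hp
    have hpk : (p:ℕ) ≤ k := by
      have h2 := p.isLt
      have : (p:ℕ) ≠ k+1 := fun h => hp (by ext; simp [h])
      omega
    set F : Polynomial R := ((gcPoly R (p:ℕ)).comp (Polynomial.X + Polynomial.C a)) *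
      ((gcPoly R (k-(p:ℕ))).comp (Polynomial.C ((k:R)+b) - Polynomial.X)) with hF
    have hdegF : F.natDegree ≤ k := by
      refine Polynomial.natDegree_mul_le.trans ?_
      have h1 := (Polynomial.natDegree_comp_le (p := gcPoly R (p:ℕ))
        (q := Polynomial.X + Polynomial.C a)).trans
        (Nat.mul_le_mul (natDegree_gcPoly _) hXa)
      have h2 := (Polynomial.natDegree_comp_le (p := gcPoly R (k-(p:ℕ)))
        (q := Polynomial.C ((k:R)+b) - Polynomial.X)).trans
        (Nat.mul_le_mul (natDegree_gcPoly _) hXb)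
      omega
    have hentry : ∀ q : Fin (k+2), matA k a b c p q = F.eval ((q:ℕ):R) := by
      intro q
      rw [matA, if_pos hpk, hF, Polynomial.eval_mul, Polynomial.eval_comp,
        Polynomial.eval_comp]
      simp only [Polynomial.eval_add, Polynomial.eval_sub, Polynomial.eval_X, Polynomial.eval_C]
      rw [gcPoly_eval, gcPoly_eval]
      congr 2
      ring
    calc ∑ q : Fin (k+2), (-1:R)^(k+1+(q:ℕ)) * ((k+1).choose (q:ℕ) : R) * matA k a b c p q
        = ∑ q : Fin (k+2), (-1:R)^(k+1+(q:ℕ)) * ((k+1).choose (q:ℕ) : R) * F.eval ((q:ℕ):R) :=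
          Finset.sum_congr rfl fun q _ => by rw [hentry]
      _ = ∑ m ∈ Finset.range (k+2), (-1:R)^(k+1+m) * ((k+1).choose m : R) * F.eval (m:R) :=
          Fin.sum_univ_eq_sum_range (fun m => (-1:R)^(k+1+m) * ((k+1).choose m : R) * F.eval (m:R)) (k+2)
      _ = ((k+1).factorial : R) * F.coeff (k+1) := FD (k+1) F (hdegF.trans (by omega))
      _ = 0 := by
          rw [Polynomial.coeff_eq_zero_of_natDegree_lt (lt_of_le_of_lt hdegF (by omega))]
          ring
  · -- h2 : last row
    set H : Polynomial R := (gcPoly R (k+1)).comp (Polynomial.X + Polynomial.C c) with hH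
    have hXc : (Polynomial.X + Polynomial.C c).natDegree ≤ 1 := by
      refine (Polynomial.natDegree_add_le _ _).trans ?_
      simp [Polynomial.natDegree_X_le]
    have hdegH : H.natDegree ≤ k+1 := by
      refine (Polynomial.natDegree_comp_le).trans ?_
      have := Nat.mul_le_mul (natDegree_gcPoly (R := R) (k+1)) hXc
      omega
    have hentry : ∀ q : Fin (k+2), matA k a b c (Fin.last (k+1)) q = H.eval ((q:ℕ):R) := by
      intro q
      rw [matA, if_neg (by simp [Fin.val_last])]
      rw [hH, Polynomial.eval_comp]
      simp only [Polynomial.eval_add, Polynomial.eval_X, Polynomial.eval_C]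
      rw [gcPoly_eval]
    calc ∑ q : Fin (k+2), (-1:R)^(k+1+(q:ℕ)) * ((k+1).choose (q:ℕ) : R) * matA k a b c (Fin.last (k+1)) q
        = ∑ q : Fin (k+2), (-1:R)^(k+1+(q:ℕ)) * ((k+1).choose (q:ℕ) : R) * H.eval ((q:ℕ):R) :=
          Finset.sum_congr rfl fun q _ => by rw [hentry]
      _ = ∑ m ∈ Finset.range (k+2), (-1:R)^(k+1+m) * ((k+1).choose m : R) * H.eval (m:R) :=
          Fin.sum_univ_eq_sum_range (fun m => (-1:R)^(k+1+m) * ((k+1).choose m : R) * H.eval (m:R)) (k+2)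
      _ = ((k+1).factorial : R) * H.coeff (k+1) := FD (k+1) H hdegH
      _ = 1 := by rw [hH, coeff_gcPoly_comp]; exact fact_mul_inv_fact (k+1)

noncomputable def matL (R : Type*) [CommRing R] [Algebra ℚ R] (k : ℕ) :
    Matrix (Fin (k+2)) (Fin (k+2)) R :=
  fun p q => (if q = p then (if (p:ℕ) = k+1 then 1 else ((k+1-(p:ℕ) : ℕ) : R)) else 0)
           + (if (q:ℕ) = (p:ℕ)+1 then (((p:ℕ)+1 : ℕ) : R) else 0)

lemma det_matL (k : ℕ) : (matL R k).det = ((k+1).factorial : R) := by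
  have ht : (matL R k).BlockTriangular id := by
    intro i j hij
    simp only [id_eq] at hij
    have h1 : j ≠ i := ne_of_lt hij
    have h3 : (j:ℕ) < (i:ℕ) := hij
    have h2 : (j:ℕ) ≠ (i:ℕ)+1 := by omega
    rw [matL, if_neg h1, if_neg h2, add_zero]
  rw [Matrix.det_of_upperTriangular ht]
  have hdiag : ∀ i : Fin (k+2), matL R k i i
      = (fun m : ℕ => if m = k+1 then (1:R) else ((k+1-m : ℕ) : R)) (i:ℕ) := by
    intro i
    rw [matL, if_pos rfl, if_neg (show ¬((i:ℕ) = (i:ℕ)+1) by omega), add_zero]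
  rw [Finset.prod_congr rfl fun i _ => hdiag i]
  rw [Fin.prod_univ_eq_prod_range (fun m : ℕ => if m = k+1 then (1:R) else ((k+1-m : ℕ) : R)) (k+2)]
  rw [Finset.prod_range_succ, if_pos rfl, mul_one]
  have hii : ∀ m ∈ Finset.range (k+1),
      (if m = k+1 then (1:R) else ((k+1-m : ℕ) : R)) = ((k+1-m : ℕ) : R) := by
    intro m hm
    rw [if_neg (by have := Finset.mem_range.mp hm; omega)]
  rw [Finset.prod_congr rfl hii, ← Nat.cast_prod]
  congr 1
  have hre := Finset.prod_range_reflect (fun j => j + 1) (k+1)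
  rw [Finset.prod_range_add_one_eq_factorial] at hre
  rw [← hre]
  refine Finset.prod_congr rfl fun j hj => ?_
  have := Finset.mem_range.mp hj
  omega

lemma L_mul_N (k : ℕ) (a b : R) :
    matL R k * matN (k+1) a b
      = (Matrix.diagonal (fun p : Fin (k+2) => if (p:ℕ) = k+1 then 1 else a + b + 1))
        * matA k a (b+1) a := by
  ext p q
  rw [Matrix.mul_apply, Matrix.diagonal_mul]
  have hsplit : ∀ r : Fin (k+2), matL R k p r * matN (k+1) a b r q
      = (if r = p then (if (p:ℕ) = k+1 then 1 else ((k+1-(p:ℕ) : ℕ) : R)) * matN (k+1) a b r q else 0)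
        + (if (r:ℕ) = (p:ℕ)+1 then (((p:ℕ)+1 : ℕ) : R) * matN (k+1) a b r q else 0) := by
    intro r
    rw [matL, add_mul]
    congr 1
    · split <;> simp
    · split <;> simp
  rw [Finset.sum_congr rfl fun r _ => hsplit r, Finset.sum_add_distrib,
    Finset.sum_ite_eq' Finset.univ p, if_pos (Finset.mem_univ _)]
  by_cases hp : (p:ℕ) = k+1
  · have hz : ∀ r : Fin (k+2),
        (if (r:ℕ) = (p:ℕ)+1 then (((p:ℕ)+1 : ℕ) : R) * matN (k+1) a b r q else 0) = 0 := by
      intro r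
      rw [if_neg (by have := r.isLt; omega)]
    rw [Finset.sum_congr rfl fun r _ => hz r, Finset.sum_const_zero, add_zero,
      if_pos hp, if_pos hp, one_mul, one_mul]
    rw [matN, matA, if_neg (by omega)]
    rw [hp, show (k+1) - (k+1) = 0 from by omega, gchoose_zero, mul_one]
  · have hpk : (p:ℕ) ≤ k := by have := p.isLt; omega
    set p' : Fin (k+2) := ⟨(p:ℕ)+1, by omega⟩ with hp'
    have hcond : ∀ r : Fin (k+2),
        (if (r:ℕ) = (p:ℕ)+1 then (((p:ℕ)+1 : ℕ) : R) * matN (k+1) a b r q else 0)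
        = (if r = p' then (((p:ℕ)+1 : ℕ) : R) * matN (k+1) a b r q else 0) := by
      intro r
      by_cases h : r = p'
      · rw [if_pos (by rw [h, hp']), if_pos h]
      · rw [if_neg (fun hv => h (Fin.ext (by rw [hv, hp']))), if_neg h]
    rw [Finset.sum_congr rfl fun r _ => hcond r,
      Finset.sum_ite_eq' Finset.univ p', if_pos (Finset.mem_univ _)]
    rw [if_neg hp, if_neg hp]
    simp only [matN, matA]
    rw [if_pos hpk]
    rw [show (k+1) - (p:ℕ) = (k - (p:ℕ)) + 1 from by omega,
      show (k+1) - ((p:ℕ)+1) = k - (p:ℕ) from by omega]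
    have hxx : (k:R) - ((q:ℕ):R) + (b+1) = (((k+1:ℕ)):R) - ((q:ℕ):R) + b := by
      push_cast; ring
    rw [hxx]
    set x : R := (((k+1:ℕ)):R) - ((q:ℕ):R) + b with hx
    set y : R := ((q:ℕ):R) + a with hy
    set m : ℕ := k - (p:ℕ) with hm
    have g1 := gchoose_succ x m
    have g2 := gchoose_succ y (p:ℕ)
    have hmc : ((m:ℕ):R) = (k:R) - ((p:ℕ):R) := by
      rw [hm, Nat.cast_sub hpk]
    rw [hmc] at g1
    have hxc : x = (k:R) + 1 - ((q:ℕ):R) + b := by rw [hx]; push_cast; ring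
    push_cast
    linear_combination gchoose y (p:ℕ) * g1 + gchoose x m * g2
      + (gchoose y (p:ℕ) * gchoose x m) * hxc
      + (gchoose y (p:ℕ) * gchoose x (m+1)) * hmc

lemma det_matN_succ (k : ℕ) (a b : R) :
    (matN (k+1) a b).det
      = algebraMap ℚ R (1/(k+1).factorial) * ((a+b+1)^(k+1) * (matN k a (b+1)).det) := by
  have h := congrArg Matrix.det (L_mul_N k a b)
  rw [Matrix.det_mul, Matrix.det_mul, det_matL, Matrix.det_diagonal,
    det_matA_eq_matN] at h
  have hprod : (∏ p : Fin (k+2), (if ((p:ℕ) = k+1) then (1:R) else a+b+1)) = (a+b+1)^(k+1) := by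
    rw [Fin.prod_univ_eq_prod_range (fun m : ℕ => if m = k+1 then (1:R) else a+b+1) (k+2)]
    rw [Finset.prod_range_succ, if_pos rfl, mul_one]
    have : ∀ m ∈ Finset.range (k+1), (if m = k+1 then (1:R) else a+b+1) = a+b+1 := by
      intro m hm
      rw [if_neg (by have := Finset.mem_range.mp hm; omega)]
    rw [Finset.prod_congr rfl this, Finset.prod_const, Finset.card_range]
  rw [hprod] at h
  have := congrArg (fun z => algebraMap ℚ R (1/(k+1).factorial) * z) h
  rw [← mul_assoc, mul_comm (algebraMap ℚ R (1/(k+1).factorial)) (((k+1).factorial : R)),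
    fact_mul_inv_fact, one_mul] at this
  exact this

lemma prod_Icc_one_eq_range (m : ℕ) (h : ℕ → R) :
    ∏ i ∈ Finset.Icc 1 m, h i = ∏ j ∈ Finset.range m, h (j+1) := by
  induction m with
  | zero => simp
  | succ m ih => rw [Finset.prod_Icc_succ_top (by omega), ih, Finset.prod_range_succ]

lemma det_matN_eq (k : ℕ) (a : R) : ∀ b : R,
    (matN k a b).det = ∏ i ∈ Finset.Icc 1 k, gchoose (a + b + (i : R)) i := by
  induction k with
  | zero =>
    intro b
    rw [Matrix.det_fin_one]
    show gchoose (((0:Fin 1):ℕ) + a) ((0:Fin 1):ℕ)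
      * gchoose ((0:ℕ) - (((0:Fin 1):ℕ):R) + b) (0 - ((0:Fin 1):ℕ)) = _
    simp
  | succ k ih =>
    intro b
    rw [det_matN_succ, ih (b+1)]
    -- product identity
    rw [prod_Icc_one_eq_range, prod_Icc_one_eq_range]
    have key : ∀ j : ℕ, (((j+1:ℕ)):R) * gchoose (a+b+((j+1:ℕ):R)) (j+1)
        = (a+b+1) * gchoose (a+b+((j+1:ℕ):R)) j := by
      intro j
      have h := gchoose_succ (a+b+((j+1:ℕ):R)) j
      push_cast at h ⊢
      linear_combination h
    have hfact : (((k+1).factorial : ℕ) : R) = ∏ j ∈ Finset.range (k+1), (((j+1:ℕ)):R) := by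
      rw [← Nat.cast_prod, Finset.prod_range_add_one_eq_factorial]
    have main : (((k+1).factorial : ℕ) : R)
        * ∏ j ∈ Finset.range (k+1), gchoose (a+b+((j+1:ℕ):R)) (j+1)
        = (a+b+1)^(k+1) * ∏ j ∈ Finset.range k, gchoose (a+(b+1)+((j+1:ℕ):R)) (j+1) := by
      rw [hfact, ← Finset.prod_mul_distrib]
      rw [Finset.prod_congr rfl fun j _ => key j]
      rw [Finset.prod_mul_distrib, Finset.prod_const, Finset.card_range]
      congr 1
      rw [Finset.prod_range_succ' (fun j => gchoose (a+b+((j+1:ℕ):R)) j) k]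
      have h0 : gchoose (a+b+((0+1:ℕ):R)) 0 = 1 := gchoose_zero _
      rw [h0, mul_one]
      refine Finset.prod_congr rfl fun j _ => ?_
      congr 1
      push_cast
      ring
    calc algebraMap ℚ R (1/(k+1).factorial)
          * ((a+b+1)^(k+1) * ∏ j ∈ Finset.range k, gchoose (a+(b+1)+((j+1:ℕ):R)) (j+1))
        = algebraMap ℚ R (1/(k+1).factorial) * ((((k+1).factorial : ℕ) : R)
            * ∏ j ∈ Finset.range (k+1), gchoose (a+b+((j+1:ℕ):R)) (j+1)) := by rw [main]
      _ = ∏ j ∈ Finset.range (k+1), gchoose (a+b+((j+1:ℕ):R)) (j+1) := by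
          rw [← mul_assoc, mul_comm (algebraMap ℚ R (1/(k+1).factorial)) _,
            fact_mul_inv_fact, one_mul]

end DetAux


theorem det_matA {R : Type*} [CommRing R] [Algebra ℚ R] (k : ℕ) (a b c : R) :
    (matA k a b c).det = ∏ i ∈ Finset.Icc 1 k, gchoose (a + b + (i : R)) i := by
  rw [DetAux.det_matA_eq_matN, DetAux.det_matN_eq]
end

section
/- Let R be a commutative ℚ-algebra, let k ≥ 1 be an integer, let a, b ∈ R, and let p, q be integers with 1 ≤ p ≤ k−1 and 0 ≤ q ≤ k. Then C(q+a, p)·C(k−q+b, k−p) − C(q+a+1, p)·C(k−q+b−1, k−p) = C(q+a+1, p)·C(k−1−q+b, k−1−p) − C(q+a, p−1)·C(k−q+b, k−p). (Equivalently, with B^k_{p,q} := A^k_{p,q}(a,b,c) − A^k_{p,q+1}(a,b,c): B^k_{p,q} = A^{k−1}_{p,q}(a+1,b,c) − A^{k−1}_{p−1,q}(a,b+1,c).) -/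
lemma gchoose_pascal {R : Type*} [CommRing R] [Algebra ℚ R] (x : R) (p : ℕ) :
    gchoose (x + 1) (p + 1) = gchoose x (p + 1) + gchoose x p := by
  unfold gchoose
  have h1 : ∏ j ∈ Finset.range (p + 1), (x + 1 - (j : R))
      = (∏ j ∈ Finset.range p, (x - (j : R))) * (x + 1) := by
    rw [Finset.prod_range_succ']
    congr 1
    · apply Finset.prod_congr rfl
      intro j _
      push_cast
      ring
    · norm_num
  have h2 : ∏ j ∈ Finset.range (p + 1), (x - (j : R))
      = (∏ j ∈ Finset.range p, (x - (j : R))) * (x - p) := Finset.prod_range_succ _ _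
  rw [h1, h2]
  have hc : algebraMap ℚ R (1 / (p + 1).factorial) * ((p : R) + 1)
      = algebraMap ℚ R (1 / p.factorial) := by
    have : ((p : R) + 1) = algebraMap ℚ R ((p : ℚ) + 1) := by
      simp
    rw [this, ← map_mul]
    congr 1
    rw [Nat.factorial_succ]
    have hp : (p.factorial : ℚ) ≠ 0 := by exact_mod_cast p.factorial_ne_zero
    field_simp
    norm_cast
  have expand : algebraMap ℚ R (1 / (p + 1).factorial) *
        ((∏ j ∈ Finset.range p, (x - (j : R))) * (x + 1))
      - algebraMap ℚ R (1 / (p + 1).factorial) *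
        ((∏ j ∈ Finset.range p, (x - (j : R))) * (x - p))
      = (algebraMap ℚ R (1 / (p + 1).factorial) * ((p : R) + 1)) *
        ∏ j ∈ Finset.range p, (x - (j : R)) := by ring
  have := expand.trans (by rw [hc])
  linear_combination this

/-- `B^k_{p,q} = A^{k-1}_{p,q}(a+1,b,c) - A^{k-1}_{p-1,q}(a,b+1,c)` for
`1 ≤ p ≤ k-1` and `0 ≤ q ≤ k`. -/
theorem matA_col_diff {R : Type*} [CommRing R] [Algebra ℚ R] (k : ℕ) (hk : 1 ≤ k)
    (a b : R) (p q : ℕ) (hp1 : 1 ≤ p) (hpk : p ≤ k - 1) (hq : q ≤ k) :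
    gchoose ((q : R) + a) p * gchoose ((k : R) - (q : R) + b) (k - p)
      - gchoose ((q : R) + a + 1) p * gchoose ((k : R) - (q : R) + b - 1) (k - p)
    = gchoose ((q : R) + a + 1) p * gchoose ((k : R) - 1 - (q : R) + b) (k - 1 - p)
      - gchoose ((q : R) + a) (p - 1) * gchoose ((k : R) - (q : R) + b) (k - p) := by
  obtain ⟨p', rfl⟩ : ∃ p', p = p' + 1 := ⟨p - 1, (Nat.succ_pred_eq_of_pos hp1).symm⟩
  have hk2 : p' + 2 ≤ k := by omega
  obtain ⟨m', hm⟩ : ∃ m', k - (p' + 1) = m' + 1 := ⟨k - p' - 2, by omega⟩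
  have hm2 : k - 1 - (p' + 1) = m' := by omega
  rw [hm, hm2, Nat.add_sub_cancel]
  have hY : gchoose ((k : R) - (q : R) + b) (m' + 1)
      = gchoose ((k : R) - (q : R) + b - 1) (m' + 1)
        + gchoose ((k : R) - (q : R) + b - 1) m' := by
    have := gchoose_pascal ((k : R) - (q : R) + b - 1) m'
    rw [show (k : R) - (q : R) + b - 1 + 1 = (k : R) - (q : R) + b by ring] at this
    exact this
  have hX := gchoose_pascal ((q : R) + a) p'
  have hZ : (k : R) - 1 - (q : R) + b = (k : R) - (q : R) + b - 1 := by ring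
  rw [hY, hX, hZ]
  ring
end

section
/- Let R be a commutative ℚ-algebra, let k ≥ 1 be an integer and let a, b, c ∈ R. Then det A^k(a,b,c) = C(k+a+b, k) · det A^{k−1}(a,b,c). -/
namespace DetMatA

open Finset Polynomial fwdDiff

variable {R : Type*} [CommRing R] [Algebra ℚ R]

noncomputable local instance : Module ℚ≥0 R :=
  Module.compHom R ((algebraMap ℚ R).comp NNRat.coeHom)

lemma smeval_descPochhammer (x : R) (n : ℕ) :
    (descPochhammer ℤ n).smeval x = ∏ j ∈ range n, (x - (j : R)) := by
  induction n with
  | zero => simp [descPochhammer_zero, Polynomial.smeval_one]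
  | succ n ih =>
      rw [descPochhammer_succ_right, Polynomial.smeval_mul, ih, prod_range_succ,
        Polynomial.smeval_sub, Polynomial.smeval_X, Polynomial.smeval_natCast]
      simp

lemma gchoose_eq_choose (x : R) (p : ℕ) : gchoose x p = Ring.choose x p := by
  rw [gchoose, ← smeval_descPochhammer, Ring.descPochhammer_eq_factorial_smul_choose,
    nsmul_eq_mul, ← mul_assoc]
  have h1 : (p.factorial : R) = algebraMap ℚ R (p.factorial : ℚ) := by rw [map_natCast]
  rw [h1, ← map_mul, one_div, inv_mul_cancel₀ (by exact_mod_cast p.factorial_ne_zero),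
    map_one, one_mul]

@[simp] lemma gchoose_zero (x : R) : gchoose x 0 = 1 := by
  simp [gchoose]

lemma gchoose_pascal (y : R) (m : ℕ) :
    gchoose (y + 1) (m + 1) = gchoose y (m + 1) + gchoose y m := by
  simp only [gchoose_eq_choose]
  rw [Ring.choose_succ_succ y m, add_comm]

lemma gchoose_vandermonde (x y : R) (n : ℕ) :
    ∑ p ∈ range (n + 1), gchoose x p * gchoose y (n - p) = gchoose (x + y) n := by
  simp only [gchoose_eq_choose]
  rw [Ring.add_choose_eq n (Commute.all x y),
    Finset.Nat.sum_antidiagonal_eq_sum_range_succ_mk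
      (fun ij => Ring.choose x ij.1 * Ring.choose y ij.2)]

lemma fwdDiff_gchoose (x : R) (m : ℕ) :
    Δ_[1] (fun q : ℕ => gchoose ((q : R) + x) (m + 1)) =
      fun q : ℕ => gchoose ((q : R) + x) m := by
  funext q
  have hc : ((q + 1 : ℕ) : R) + x = ((q : R) + x) + 1 := by push_cast; ring
  simp only [fwdDiff, hc, gchoose_pascal ((q : R) + x) m]
  ring

lemma fwdDiff_iter_gchoose (x : R) (m j : ℕ) :
    (fwdDiff (1:ℕ))^[j] (fun q : ℕ => gchoose ((q : R) + x) (m + j)) =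
      fun q : ℕ => gchoose ((q : R) + x) m := by
  induction j with
  | zero => simp
  | succ j ih =>
      rw [Function.iterate_succ_apply, show m + (j + 1) = (m + j) + 1 from rfl,
        fwdDiff_gchoose, ih]


lemma fwdDiff_iter_poly [Nontrivial R] (n : ℕ) (P : Polynomial R)
    (hP : P.degree < (n : WithBot ℕ)) :
    (fwdDiff (1:ℕ))^[n] (fun q : ℕ => P.eval (q : R)) = fun _ => 0 := by
  induction n generalizing P with
  | zero =>
      have h0 : P = 0 := by
        rw [← Polynomial.degree_eq_bot, ← Nat.WithBot.lt_zero_iff]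
        exact_mod_cast hP
      subst h0
      funext q; simp
  | succ n ih =>
      rw [Function.iterate_succ_apply]
      have hdiff : Δ_[1] (fun q : ℕ => P.eval (q : R)) =
          fun q : ℕ => (P.comp (X + C 1) - P).eval (q : R) := by
        funext q
        simp only [fwdDiff, Polynomial.eval_sub, Polynomial.eval_comp, Polynomial.eval_add,
          Polynomial.eval_X, Polynomial.eval_C, Nat.cast_add, Nat.cast_one]
      rw [hdiff]
      apply ih
      by_cases hP0 : P.degree ≤ 0
      · have hz : P.comp (X + C 1) - P = 0 := by
          conv_lhs => rw [Polynomial.eq_C_of_degree_le_zero hP0]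
          simp
        rw [hz, Polynomial.degree_zero]
        exact WithBot.bot_lt_coe n
      · push_neg at hP0
        have hPne : P ≠ 0 := fun h => by simp [h] at hP0
        have hq1 : (X + C (1 : R)).natDegree = 1 := Polynomial.natDegree_X_add_C 1
        have hlcne : P.leadingCoeff ≠ 0 := Polynomial.leadingCoeff_ne_zero.mpr hPne
        have hndeg : (P.comp (X + C 1)).natDegree = P.natDegree := by
          have := Polynomial.natDegree_comp_eq_of_mul_ne_zero (p := P) (q := X + C 1)
            (by rw [(Polynomial.monic_X_add_C (1 : R)).leadingCoeff, one_pow, mul_one]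
                exact hlcne)
          rwa [hq1, mul_one] at this
        have hlc : (P.comp (X + C 1)).leadingCoeff = P.leadingCoeff := by
          have hcc := Polynomial.coeff_comp_degree_mul_degree (p := P) (q := X + C 1)
            (by rw [hq1]; exact one_ne_zero)
          rw [hq1, mul_one, (Polynomial.monic_X_add_C (1 : R)).leadingCoeff, one_pow,
            mul_one] at hcc
          rw [Polynomial.leadingCoeff, hndeg, hcc, Polynomial.leadingCoeff]
        have hcompne : P.comp (X + C 1) ≠ 0 := by
          intro h
          apply hlcne
          rw [← hlc, h, Polynomial.leadingCoeff_zero]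
        have hdeg : (P.comp (X + C 1)).degree = P.degree := by
          rw [Polynomial.degree_eq_natDegree hcompne, Polynomial.degree_eq_natDegree hPne, hndeg]
        have hlt := Polynomial.degree_sub_lt hdeg hcompne hlc
        rw [hdeg] at hlt
        have hPle : P.degree ≤ (n : WithBot ℕ) := by
          rcases hd : P.degree with _ | d
          · exact bot_le
          · rw [hd] at hP
            have h1 : ((d : ℕ) : WithBot ℕ) < ((n + 1 : ℕ) : WithBot ℕ) := hP
            have h2 : (d : ℕ) < n + 1 := WithBot.coe_lt_coe.mp h1
            exact (WithBot.coe_le_coe.mpr (Nat.lt_succ_iff.mp h2) : _)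
        exact lt_of_lt_of_le hlt hPle

/-- The key alternating-sum-to-forward-difference conversion. -/
lemma sum_mul_w (f : ℕ → R) (n : ℕ) :
    ∑ q : Fin (n + 2), f (q : ℕ) *
        (((-1 : ℤ) ^ (n + 1 - (q : ℕ)) * (n + 1).choose (q : ℕ) : ℤ) : R) =
      (fwdDiff (1:ℕ))^[n + 1] f 0 := by
  rw [fwdDiff_iter_eq_sum_shift]
  rw [Fin.sum_univ_eq_sum_range
    (fun q => f q * (((-1 : ℤ) ^ (n + 1 - q) * (n + 1).choose q : ℤ) : R)) (n + 2)]
  apply Finset.sum_congr rfl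
  intro q _
  rw [zsmul_eq_mul, mul_comm]
  simp

/-- The polynomial whose evaluations at naturals give row `p` of the matrix. -/
noncomputable def rowP (a b : R) (k p : ℕ) : Polynomial R :=
  (C (algebraMap ℚ R (1 / p.factorial)) * ∏ j ∈ range p, (X + C (a - j))) *
    (C (algebraMap ℚ R (1 / (k - p).factorial)) *
      ∏ j ∈ range (k - p), (C ((k : R) + b - j) - X))

lemma rowP_eval (a b : R) (k p : ℕ) (x : R) :
    (rowP a b k p).eval x = gchoose (x + a) p * gchoose ((k : R) - x + b) (k - p) := by
  simp only [rowP, gchoose, Polynomial.eval_mul, Polynomial.eval_C, Polynomial.eval_prod,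
    Polynomial.eval_add, Polynomial.eval_sub, Polynomial.eval_X]
  congr 2
  · exact Finset.prod_congr rfl fun j _ => by ring
  · exact Finset.prod_congr rfl fun j _ => by ring

lemma rowP_degree (a b : R) (k p : ℕ) (hp : p ≤ k) :
    (rowP a b k p).degree < ((k + 1 : ℕ) : WithBot ℕ) := by
  have h1 : (C (algebraMap ℚ R (1 / p.factorial)) *
      ∏ j ∈ range p, (X + C (a - j))).degree ≤ (p : WithBot ℕ) := by
    refine le_trans (Polynomial.degree_mul_le _ _) ?_
    have hprod : (∏ j ∈ range p, (X + C (a - (j : R)))).degree ≤ (p : WithBot ℕ) := by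
      refine le_trans (Polynomial.degree_prod_le _ _) ?_
      refine le_trans (Finset.sum_le_sum (g := fun _ => (1 : WithBot ℕ)) fun j _ => ?_) ?_
      · exact le_trans (Polynomial.degree_add_le _ _)
          (max_le Polynomial.degree_X_le (le_trans Polynomial.degree_C_le (by norm_num)))
      · simp [Finset.sum_const, Nat.smul_one_eq_cast]
    calc (C (algebraMap ℚ R (1 / p.factorial))).degree +
          (∏ j ∈ range p, (X + C (a - (j : R)))).degree
        ≤ 0 + (p : WithBot ℕ) := add_le_add Polynomial.degree_C_le hprod
      _ = (p : WithBot ℕ) := zero_add _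
  have h2 : (C (algebraMap ℚ R (1 / (k - p).factorial)) *
      ∏ j ∈ range (k - p), (C ((k : R) + b - j) - X)).degree ≤ ((k - p : ℕ) : WithBot ℕ) := by
    refine le_trans (Polynomial.degree_mul_le _ _) ?_
    have hprod : (∏ j ∈ range (k - p), (C ((k : R) + b - (j : R)) - X)).degree
        ≤ ((k - p : ℕ) : WithBot ℕ) := by
      refine le_trans (Polynomial.degree_prod_le _ _) ?_
      refine le_trans (Finset.sum_le_sum (g := fun _ => (1 : WithBot ℕ)) fun j _ => ?_) ?_
      · exact le_trans (Polynomial.degree_sub_le _ _)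
          (max_le (le_trans Polynomial.degree_C_le (by norm_num)) Polynomial.degree_X_le)
      · simp [Finset.sum_const, Nat.smul_one_eq_cast]
    calc (C (algebraMap ℚ R (1 / (k - p).factorial))).degree +
          (∏ j ∈ range (k - p), (C ((k : R) + b - (j : R)) - X)).degree
        ≤ 0 + ((k - p : ℕ) : WithBot ℕ) := add_le_add Polynomial.degree_C_le hprod
      _ = _ := zero_add _
  have := le_trans (Polynomial.degree_mul_le _ _) (add_le_add h1 h2)
  rw [rowP]
  refine lt_of_le_of_lt (le_trans (Polynomial.degree_mul_le _ _) (add_le_add h1 h2)) ?_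
  have : ((p : ℕ) : WithBot ℕ) + ((k - p : ℕ) : WithBot ℕ) = ((k : ℕ) : WithBot ℕ) := by
    rw [← Nat.cast_add]
    congr 1
    omega
  rw [this]
  exact_mod_cast Nat.lt_succ_self k


/-- The inner `(k+1) × (k+1)` matrix with entries `C(q+a,p) C(k-q+b, k-p)`. -/
noncomputable def matM (k : ℕ) (a b : R) : Matrix (Fin (k + 1)) (Fin (k + 1)) R :=
  fun p q => gchoose ((q : ℕ) + a) (p : ℕ) * gchoose ((k : R) - (q : ℕ) + b) (k - (p : ℕ))

set_option maxHeartbeats 1000000 in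
lemma detA_eq_detM [Nontrivial R] (k : ℕ) (a b c : R) :
    (matA k a b c).det = (matM k a b).det := by
  classical
  set w : Fin (k + 2) → R :=
    fun q => (((-1 : ℤ) ^ (k + 1 - (q : ℕ)) * (k + 1).choose (q : ℕ) : ℤ) : R) with hw
  set E : Matrix (Fin (k + 2)) (Fin (k + 2)) R :=
    fun i j => if j = Fin.last (k + 1) then w i else if i = j then 1 else 0 with hE
  have hEdet : E.det = 1 := by
    rw [Matrix.det_of_upperTriangular]
    · apply Finset.prod_eq_one
      intro i _
      by_cases h : i = Fin.last (k + 1)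
      · subst h
        simp only [hE, if_pos rfl, hw, Fin.val_last, Nat.sub_self, pow_zero, Nat.choose_self,
          one_mul, Nat.cast_one, Int.cast_one]
      · simp [hE, h]
    · intro i j hij
      have hjl : j ≠ Fin.last (k + 1) := ne_of_lt (lt_of_lt_of_le hij (Fin.le_last i))
      have hne : ¬(i = j) := fun h => absurd hij (by simp [h])
      simp [hE, hjl, hne]
  have hAE : ∀ i j : Fin (k + 2), j ≠ Fin.last (k + 1) →
      (matA k a b c * E) i j = matA k a b c i j := by
    intro i j hj
    rw [Matrix.mul_apply]
    rw [Finset.sum_eq_single j]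
    · simp [hE, hj]
    · intro q _ hq
      simp [hE, hj, hq]
    · simp
  have hlastcol : ∀ i : Fin (k + 2),
      (matA k a b c * E) i (Fin.last (k + 1)) = if i = Fin.last (k + 1) then 1 else 0 := by
    intro i
    rw [Matrix.mul_apply]
    simp only [hE, if_pos rfl]
    by_cases hi : (i : ℕ) ≤ k
    · have hil : i ≠ Fin.last (k + 1) := by
        intro h; rw [h] at hi; simp only [Fin.val_last] at hi; omega
      rw [if_neg hil]
      have hentry : ∀ q : Fin (k + 2),
          matA k a b c i q = (rowP a b k (i : ℕ)).eval ((q : ℕ) : R) := by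
        intro q
        rw [matA, if_pos hi, rowP_eval]
      calc ∑ q : Fin (k + 2), matA k a b c i q * w q
          = ∑ q : Fin (k + 2), (fun t : ℕ => (rowP a b k (i : ℕ)).eval (t : R)) (q : ℕ) *
              (((-1 : ℤ) ^ (k + 1 - (q : ℕ)) * (k + 1).choose (q : ℕ) : ℤ) : R) := by
            apply Finset.sum_congr rfl
            intro q _
            rw [hentry q, hw]
        _ = (fwdDiff (1:ℕ))^[k + 1] (fun t : ℕ => (rowP a b k (i : ℕ)).eval (t : R)) 0 :=
            sum_mul_w (fun t : ℕ => (rowP a b k (i : ℕ)).eval (t : R)) k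
        _ = 0 := by rw [fwdDiff_iter_poly (k + 1) _ (rowP_degree a b k (i : ℕ) hi)]
    · have hil : i = Fin.last (k + 1) := by
        apply Fin.ext
        have := i.isLt
        simp only [Fin.val_last]
        omega
      rw [if_pos hil]
      have hentry : ∀ q : Fin (k + 2),
          matA k a b c i q = (fun t : ℕ => gchoose ((t : R) + c) (0 + (k + 1))) (q : ℕ) := by
        intro q
        rw [matA, if_neg hi]
        simp
      calc ∑ q : Fin (k + 2), matA k a b c i q * w q
          = ∑ q : Fin (k + 2), (fun t : ℕ => gchoose ((t : R) + c) (0 + (k + 1))) (q : ℕ) *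
              (((-1 : ℤ) ^ (k + 1 - (q : ℕ)) * (k + 1).choose (q : ℕ) : ℤ) : R) := by
            apply Finset.sum_congr rfl
            intro q _
            rw [hentry q, hw]
        _ = (fwdDiff (1:ℕ))^[k + 1] (fun t : ℕ => gchoose ((t : R) + c) (0 + (k + 1))) 0 :=
            sum_mul_w (fun t : ℕ => gchoose ((t : R) + c) (0 + (k + 1))) k
        _ = 1 := by rw [fwdDiff_iter_gchoose c 0 (k + 1)]; simp
  have hsub : (matA k a b c * E).submatrix
      (Fin.last (k + 1)).succAbove (Fin.last (k + 1)).succAbove = matM k a b := by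
    ext p q
    rw [Matrix.submatrix_apply, Fin.succAbove_last]
    rw [hAE _ _ (Fin.castSucc_lt_last q).ne]
    rw [matA, if_pos (show ((Fin.castSucc p : Fin (k + 2)) : ℕ) ≤ k from
      Nat.lt_succ_iff.mp (by simpa using p.isLt))]
    rfl
  calc (matA k a b c).det = (matA k a b c).det * E.det := by rw [hEdet, mul_one]
    _ = (matA k a b c * E).det := (Matrix.det_mul _ _).symm
    _ = ∑ i : Fin (k + 2), (-1) ^ ((i : ℕ) + ((Fin.last (k + 1) : Fin (k + 2)) : ℕ)) *
          (matA k a b c * E) i (Fin.last (k + 1)) *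
          ((matA k a b c * E).submatrix i.succAbove (Fin.last (k + 1)).succAbove).det :=
        Matrix.det_succ_column _ _
    _ = (matM k a b).det := by
        rw [Finset.sum_eq_single (Fin.last (k + 1))]
        · rw [hlastcol, if_pos rfl, hsub]
          simp only [Fin.val_last, mul_one]
          rw [← two_mul, pow_mul]
          norm_num
        · intro q _ hq
          rw [hlastcol, if_neg hq]
          ring
        · simp

/-- Determinant of the "column difference" elementary matrix is 1. -/
lemma det_diffMat (n : ℕ) :
    (Matrix.of fun i j : Fin n =>
      (if i = j then (1 : R) else 0) - (if (i : ℕ) + 1 = (j : ℕ) then 1 else 0)).det = 1 := by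
  rw [Matrix.det_of_upperTriangular]
  · apply Finset.prod_eq_one
    intro i _
    have h1 : ¬((i : ℕ) + 1 = (i : ℕ)) := by omega
    simp [h1]
  · intro i j hij
    have h1 : ¬(i = j) := fun h => absurd hij (by simp [h])
    have h2 : ¬((i : ℕ) + 1 = (j : ℕ)) := by
      have : (j : ℕ) < (i : ℕ) := hij
      omega
    simp [Matrix.of_apply, h1, h2]

lemma key_entry (y x : R) (P m : ℕ) (hP : P ≤ m) :
    gchoose (y + 1) (P + 1) * gchoose x (m - P) -
        gchoose y (P + 1) * gchoose (x + 1) (m - P) =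
      gchoose y P * gchoose x (m - P) -
        (if P = m then 0 else gchoose y (P + 1) * gchoose x (m - P - 1)) := by
  rcases eq_or_lt_of_le hP with hPm | hPm
  · subst hPm
    simp only [Nat.sub_self, gchoose_zero, mul_one, eq_self_iff_true, if_true, sub_zero]
    rw [gchoose_pascal y P]
    ring
  · obtain ⟨t, ht⟩ : ∃ t, m - P = t + 1 := ⟨m - P - 1, by omega⟩
    rw [ht, Nat.add_sub_cancel, if_neg (by omega)]
    rw [gchoose_pascal y P, gchoose_pascal x t]
    ring

set_option maxHeartbeats 1600000 in
lemma detM_succ (m : ℕ) (a b : R) :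
    (matM (m + 1) a b).det =
      gchoose (((m + 1 : ℕ) : R) + a + b) (m + 1) * (matM m a b).det := by
  classical
  set c0 : R := gchoose (((m + 1 : ℕ) : R) + a + b) (m + 1) with hc0
  set M := matM (m + 1) a b with hM
  -- row sums are constant
  have hrow : ∀ j : Fin (m + 2), ∑ q : Fin (m + 2), M q j = c0 := by
    intro j
    have := Fin.sum_univ_eq_sum_range
      (fun t => gchoose (((j : ℕ) : R) + a) t *
        gchoose (((m + 1 : ℕ) : R) - ((j : ℕ) : R) + b) ((m + 1) - t)) (m + 2)
    calc ∑ q : Fin (m + 2), M q j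
        = ∑ t ∈ range (m + 2), gchoose (((j : ℕ) : R) + a) t *
            gchoose (((m + 1 : ℕ) : R) - ((j : ℕ) : R) + b) ((m + 1) - t) := this
      _ = gchoose ((((j : ℕ) : R) + a) + (((m + 1 : ℕ) : R) - ((j : ℕ) : R) + b)) (m + 1) :=
          gchoose_vandermonde _ _ (m + 1)
      _ = c0 := by rw [hc0]; congr 1; push_cast; ring
  -- the row-summing elementary matrix
  set F : Matrix (Fin (m + 2)) (Fin (m + 2)) R :=
    Matrix.of (fun i j => if i = 0 then (1 : R) else if i = j then 1 else 0) with hF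
  have hFdet : F.det = 1 := by
    rw [Matrix.det_of_upperTriangular]
    · apply Finset.prod_eq_one
      intro i _
      by_cases h : i = 0 <;> simp [hF, h]
    · intro i j hij
      have h1 : ¬(i = 0) := by
        intro h
        rw [h] at hij
        exact absurd hij (by simp [Fin.le_def])
      have h2 : ¬(i = j) := fun h => absurd hij (by simp [h])
      simp [hF, h1, h2]
  have hFM : F * M = Matrix.updateRow M 0 (fun _ => c0) := by
    ext i j
    by_cases hi : i = 0
    · subst hi
      rw [Matrix.updateRow_self]
      rw [Matrix.mul_apply]
      calc ∑ q : Fin (m + 2), F 0 q * M q j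
          = ∑ q : Fin (m + 2), M q j := by
            apply Finset.sum_congr rfl
            intro q _
            simp [hF]
        _ = c0 := hrow j
    · rw [Matrix.updateRow_ne hi, Matrix.mul_apply]
      rw [Finset.sum_eq_single i]
      · simp [hF, hi]
      · intro q _ hq
        simp [hF, hi, (Ne.symm hq : ¬ i = q)]
      · simp
  set N := Matrix.updateRow M 0 (fun _ => (1 : R)) with hN
  have hMN : M.det = c0 * N.det := by
    have hsmul : (fun _ : Fin (m + 2) => c0) = c0 • (fun _ => (1 : R)) := by
      funext t; simp
    calc M.det = F.det * M.det := by rw [hFdet, one_mul]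
      _ = (F * M).det := (Matrix.det_mul _ _).symm
      _ = (Matrix.updateRow M 0 (c0 • fun _ => (1 : R))).det := by rw [hFM, hsmul]
      _ = c0 * N.det := by rw [Matrix.det_updateRow_smul]
  -- the column-differencing elementary matrix
  set G : Matrix (Fin (m + 2)) (Fin (m + 2)) R :=
    Matrix.of (fun i j => (if i = j then (1 : R) else 0) -
      (if (i : ℕ) + 1 = (j : ℕ) then 1 else 0)) with hG
  have hGdet : G.det = 1 := det_diffMat (m + 2)
  have hNG : ∀ (p j : Fin (m + 2)), (N * G) p j =
      N p j - (if hj : (j : ℕ) = 0 then 0 else N p ⟨(j : ℕ) - 1, by omega⟩) := by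
    intro p j
    rw [Matrix.mul_apply]
    have expand : ∀ q : Fin (m + 2), N p q * G q j =
        N p q * (if q = j then (1 : R) else 0) -
          N p q * (if (q : ℕ) + 1 = (j : ℕ) then 1 else 0) := by
      intro q
      rw [hG]
      simp only [Matrix.of_apply]
      ring
    rw [Finset.sum_congr rfl fun q _ => expand q, Finset.sum_sub_distrib]
    congr 1
    · rw [Finset.sum_eq_single j]
      · simp
      · intro q _ hq; simp [hq]
      · simp
    · by_cases hj : (j : ℕ) = 0
      · rw [dif_pos hj]
        apply Finset.sum_eq_zero
        intro q _
        have : ¬((q : ℕ) + 1 = (j : ℕ)) := by omega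
        simp [this]
      · rw [dif_neg hj]
        have hjlt : (j : ℕ) - 1 < m + 2 := by omega
        rw [Finset.sum_eq_single (⟨(j : ℕ) - 1, hjlt⟩ : Fin (m + 2))]
        · have hv : ((⟨(j : ℕ) - 1, hjlt⟩ : Fin (m + 2)) : ℕ) + 1 = (j : ℕ) := by
            simp only []
            omega
          simp [hv]
        · intro q _ hq
          have : ¬((q : ℕ) + 1 = (j : ℕ)) := by
            intro h
            apply hq
            apply Fin.ext
            simp only []
            omega
          simp [this]
        · simp
  have hrow0 : ∀ j : Fin (m + 2), (N * G) 0 j = if (j : ℕ) = 0 then 1 else 0 := by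
    intro j
    rw [hNG]
    have hN0 : ∀ x : Fin (m + 2), N 0 x = 1 := by
      intro x
      rw [hN]
      simp [Matrix.updateRow_self]
    by_cases hj : (j : ℕ) = 0
    · rw [dif_pos hj, if_pos hj, hN0, sub_zero]
    · rw [dif_neg hj, if_neg hj, hN0, hN0, sub_self]
  -- expansion of det (N*G) along row 0
  have hNGdet : N.det = ((N * G).submatrix Fin.succ Fin.succ).det := by
    calc N.det = N.det * G.det := by rw [hGdet, mul_one]
      _ = (N * G).det := (Matrix.det_mul _ _).symm
      _ = ∑ j : Fin (m + 2), (-1) ^ (j : ℕ) * (N * G) 0 j *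
            ((N * G).submatrix Fin.succ j.succAbove).det := Matrix.det_succ_row_zero _
      _ = ((N * G).submatrix Fin.succ Fin.succ).det := by
          rw [Finset.sum_eq_single (0 : Fin (m + 2))]
          · rw [hrow0]
            simp
          · intro j _ hj
            rw [hrow0, if_neg (by intro h; exact hj (Fin.ext (by simp [h])))]
            ring
          · simp
  -- identify the submatrix with T * matM m a b
  set B := matM m a b with hB
  set T : Matrix (Fin (m + 1)) (Fin (m + 1)) R :=
    Matrix.of (fun i j => (if i = j then (1 : R) else 0) -
      (if (i : ℕ) + 1 = (j : ℕ) then 1 else 0)) with hT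
  have hTdet : T.det = 1 := det_diffMat (m + 1)
  have hTB : ∀ (p q : Fin (m + 1)), (T * B) p q =
      B p q - (if hp : (p : ℕ) = m then 0 else B ⟨(p : ℕ) + 1, by omega⟩ q) := by
    intro p q
    rw [Matrix.mul_apply]
    have expand : ∀ r : Fin (m + 1), T p r * B r q =
        (if p = r then (1 : R) else 0) * B r q -
          (if (p : ℕ) + 1 = (r : ℕ) then 1 else 0) * B r q := by
      intro r
      rw [hT]
      simp only [Matrix.of_apply]
      ring
    rw [Finset.sum_congr rfl fun r _ => expand r, Finset.sum_sub_distrib]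
    congr 1
    · rw [Finset.sum_eq_single p]
      · simp
      · intro r _ hr; simp [(Ne.symm hr : ¬ p = r)]
      · simp
    · by_cases hp : (p : ℕ) = m
      · rw [dif_pos hp]
        apply Finset.sum_eq_zero
        intro r _
        have : ¬((p : ℕ) + 1 = (r : ℕ)) := by
          have := r.isLt
          omega
        simp [this]
      · rw [dif_neg hp]
        have hplt : (p : ℕ) + 1 < m + 1 := by
          have := p.isLt
          omega
        rw [Finset.sum_eq_single (⟨(p : ℕ) + 1, hplt⟩ : Fin (m + 1))]
        · simp
        · intro r _ hr
          have : ¬((p : ℕ) + 1 = (r : ℕ)) := by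
            intro h
            apply hr
            apply Fin.ext
            simp only []
            omega
          simp [this]
        · simp
  have hsubTB : (N * G).submatrix Fin.succ Fin.succ = T * B := by
    ext p q
    rw [Matrix.submatrix_apply, hNG, hTB]
    have hq1 : ¬((q.succ : ℕ) = 0) := by simp
    rw [dif_neg hq1]
    have hqv : (⟨(q.succ : ℕ) - 1, by omega⟩ : Fin (m + 2)) = q.castSucc := by
      apply Fin.ext
      simp
    rw [hqv]
    have hNM : ∀ x : Fin (m + 2), N p.succ x = M p.succ x := by
      intro x
      rw [hN, Matrix.updateRow_ne (Fin.succ_ne_zero p)]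
    rw [hNM, hNM]
    -- now a pure gchoose identity
    have hPm : (p : ℕ) ≤ m := Nat.lt_succ_iff.mp p.isLt
    have e1 : M p.succ q.succ =
        gchoose ((((q : ℕ) : R) + a) + 1) ((p : ℕ) + 1) *
          gchoose ((m : R) - ((q : ℕ) : R) + b) (m - (p : ℕ)) := by
      rw [hM, matM]
      have h1 : ((q.succ : ℕ) : R) + a = (((q : ℕ) : R) + a) + 1 := by
        push_cast [Fin.val_succ]; ring
      have h2 : ((m + 1 : ℕ) : R) - ((q.succ : ℕ) : R) + b = (m : R) - ((q : ℕ) : R) + b := by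
        push_cast [Fin.val_succ]; ring
      have h3 : (m + 1) - ((p.succ : ℕ)) = m - (p : ℕ) := by
        simp [Fin.val_succ]
      rw [h1, h2, h3, Fin.val_succ]
    have e2 : M p.succ q.castSucc =
        gchoose (((q : ℕ) : R) + a) ((p : ℕ) + 1) *
          gchoose (((m : R) - ((q : ℕ) : R) + b) + 1) (m - (p : ℕ)) := by
      rw [hM, matM]
      have h1 : ((q.castSucc : ℕ) : R) + a = ((q : ℕ) : R) + a := by simp
      have h2 : ((m + 1 : ℕ) : R) - ((q.castSucc : ℕ) : R) + b =
          ((m : R) - ((q : ℕ) : R) + b) + 1 := by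
        push_cast [Fin.coe_castSucc]; ring
      have h3 : (m + 1) - ((p.succ : ℕ)) = m - (p : ℕ) := by simp [Fin.val_succ]
      rw [h1, h2, h3, Fin.val_succ]
    have e3 : B p q =
        gchoose (((q : ℕ) : R) + a) (p : ℕ) *
          gchoose ((m : R) - ((q : ℕ) : R) + b) (m - (p : ℕ)) := by
      rw [hB, matM]
    rw [e1, e2, e3]
    have := key_entry (((q : ℕ) : R) + a) ((m : R) - ((q : ℕ) : R) + b) (p : ℕ) m hPm
    rw [this]
    by_cases hp : (p : ℕ) = m
    · rw [if_pos hp, dif_pos hp]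
    · rw [if_neg hp, dif_neg hp]
      have e4 : B ⟨(p : ℕ) + 1, by omega⟩ q =
          gchoose (((q : ℕ) : R) + a) ((p : ℕ) + 1) *
            gchoose ((m : R) - ((q : ℕ) : R) + b) (m - ((p : ℕ) + 1)) := rfl
      rw [e4, ← Nat.sub_sub]
  -- put everything together
  calc M.det = c0 * N.det := hMN
    _ = c0 * ((N * G).submatrix Fin.succ Fin.succ).det := by rw [hNGdet]
    _ = c0 * (T * B).det := by rw [hsubTB]
    _ = c0 * (T.det * B.det) := by rw [Matrix.det_mul]
    _ = c0 * B.det := by rw [hTdet, one_mul]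

end DetMatA

/-- The recursion `det A^k(a,b,c) = C(k+a+b, k) · det A^{k-1}(a,b,c)` for `k ≥ 1`. -/
theorem det_matA_rec {R : Type*} [CommRing R] [Algebra ℚ R] (k : ℕ) (hk : 1 ≤ k)
    (a b c : R) :
    (matA k a b c).det = gchoose ((k : R) + a + b) k * (matA (k - 1) a b c).det := by
  rcases subsingleton_or_nontrivial R with hS | hN
  · exact Subsingleton.elim _ _
  · obtain ⟨m, rfl⟩ : ∃ m, k = m + 1 := ⟨k - 1, by omega⟩
    rw [DetMatA.detA_eq_detM (m + 1) a b c, DetMatA.detM_succ m a b]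
    congr 1
    exact (DetMatA.detA_eq_detM m a b c).symm
end

section
/- Let k be a nonnegative integer and let a, b, c ∈ ℚ with a + b = 0. Then det A^k(a,b,c) = 1; in particular the matrix A^k(a,b,c) is invertible over ℚ. (The cases (a,b,c) = (−1/2, 1/2, −1/2) and (a,b,c) = (1/2, −1/2, 1/2) are the instances used in the paper.) -/
open Finset

lemma gc_def (x : ℚ) (p : ℕ) :
    gchoose x p = (p.factorial : ℚ)⁻¹ * ∏ j ∈ Finset.range p, (x - j) := by
  simp [gchoose, one_div]

lemma gc_zero (x : ℚ) : gchoose x 0 = 1 := by simp [gc_def]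

lemma descPoch_smeval (x : ℚ) (n : ℕ) :
    (descPochhammer ℤ n).smeval x = ∏ j ∈ Finset.range n, (x - j) := by
  induction n with
  | zero => simp [descPochhammer_zero, Polynomial.smeval_one]
  | succ n ih =>
    rw [descPochhammer_succ_right, Polynomial.smeval_mul, ih, Finset.prod_range_succ]
    congr 1
    simp [Polynomial.smeval_sub, Polynomial.smeval_X, Polynomial.smeval_natCast]

lemma gc_eq_ringChoose (x : ℚ) (n : ℕ) : gchoose x n = Ring.choose x n := by
  have h := Ring.descPochhammer_eq_factorial_smul_choose x n
  rw [descPoch_smeval] at h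
  rw [gc_def, h, nsmul_eq_mul,
    inv_mul_cancel_left₀ (by exact_mod_cast n.factorial_ne_zero)]

lemma gc_nat (q j : ℕ) : gchoose (q : ℚ) j = (q.choose j : ℚ) := by
  rw [gc_eq_ringChoose, Ring.choose_natCast]

lemma gc_vandermonde (x y : ℚ) (n : ℕ) :
    gchoose (x + y) n = ∑ i ∈ range (n + 1), gchoose x i * gchoose y (n - i) := by
  simp only [gc_eq_ringChoose]
  rw [Ring.add_choose_eq n (Commute.all x y), Finset.Nat.sum_antidiagonal_eq_sum_range_succ_mk]

lemma gc_pascal (x : ℚ) (n : ℕ) :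
    gchoose (x + 1) (n + 1) = gchoose x n + gchoose x (n + 1) := by
  simp only [gc_eq_ringChoose]
  exact Ring.choose_succ_succ x n

lemma gc_alt (y : ℚ) (M : ℕ) :
    ∑ m ∈ range (M + 1), (-1 : ℚ) ^ m * gchoose y m = (-1) ^ M * gchoose (y - 1) M := by
  induction M with
  | zero => simp [gc_zero]
  | succ M ih =>
    rw [Finset.sum_range_succ, ih]
    have hy : gchoose y (M + 1) = gchoose (y - 1) M + gchoose (y - 1) (M + 1) := by
      have := gc_pascal (y - 1) M
      rwa [sub_add_cancel] at this
    rw [hy]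
    ring

lemma gc_reflect (z : ℚ) (M : ℕ) :
    gchoose ((M : ℚ) - 1 - z) M = (-1) ^ M * gchoose z M := by
  rw [gc_def, gc_def]
  have h1 : ∏ j ∈ range M, ((M : ℚ) - 1 - z - j) = ∏ j ∈ range M, ((j : ℚ) - z) := by
    rw [← Finset.prod_range_reflect (fun j => (j : ℚ) - z) M]
    refine Finset.prod_congr rfl fun j hj => ?_
    have hj' : j < M := Finset.mem_range.mp hj
    have : ((M - 1 - j : ℕ) : ℚ) = (M : ℚ) - 1 - j := by
      have : 1 + j ≤ M := by omega
      push_cast [Nat.cast_sub (by omega : j ≤ M - 1), Nat.cast_sub (by omega : 1 ≤ M)]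
      ring
    rw [this]; ring
  have h2 : ∏ j ∈ range M, ((j : ℚ) - z) = (-1) ^ M * ∏ j ∈ range M, (z - j) := by
    rw [show ((-1 : ℚ)) ^ M = ∏ _j ∈ range M, (-1 : ℚ) by simp, ← Finset.prod_mul_distrib]
    exact Finset.prod_congr rfl fun j _ => by ring
  rw [h1, h2]; ring

lemma gc_trinom (x : ℚ) {p j : ℕ} (h : p ≤ j) :
    ((j.choose p : ℕ) : ℚ) * gchoose x j = gchoose x p * gchoose (x - p) (j - p) := by
  simp only [gc_eq_ringChoose]
  rw [← Ring.choose_smul_choose x h, nsmul_eq_mul]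

lemma gc_key (x : ℚ) {p k : ℕ} (hp : p ≤ k) :
    ∑ j ∈ range (k + 1), (-1 : ℚ) ^ (p + j) * (j.choose p : ℚ) * gchoose x j
      = gchoose x p * gchoose ((k : ℚ) - x) (k - p) := by
  have hsub : ∑ j ∈ range (k + 1), (-1 : ℚ) ^ (p + j) * (j.choose p : ℚ) * gchoose x j
      = ∑ j ∈ Finset.Ico p (k + 1), (-1 : ℚ) ^ (p + j) * (j.choose p : ℚ) * gchoose x j := by
    refine (Finset.sum_subset ?_ ?_).symm
    · intro j hj
      simp only [Finset.mem_Ico] at hj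
      exact Finset.mem_range.mpr hj.2
    · intro j hj hj'
      simp only [Finset.mem_range] at hj
      simp only [Finset.mem_Ico, not_and, not_le] at hj'
      have : j < p := by by_contra h; exact absurd hj (by simp [Finset.mem_Ico.mpr ⟨le_of_not_gt h, hj⟩] at hj' ⊢; omega)
      rw [Nat.choose_eq_zero_of_lt this]
      simp
  rw [hsub, Finset.sum_Ico_eq_sum_range]
  have hkp : k + 1 - p = (k - p) + 1 := by omega
  rw [hkp]
  have hterm : ∀ m ∈ range ((k - p) + 1),
      (-1 : ℚ) ^ (p + (p + m)) * ((p + m).choose p : ℚ) * gchoose x (p + m)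
        = gchoose x p * ((-1 : ℚ) ^ m * gchoose (x - p) m) := by
    intro m _
    have ht := gc_trinom x (Nat.le_add_right p m)
    rw [Nat.add_sub_cancel_left] at ht
    have hsign : (-1 : ℚ) ^ (p + (p + m)) = (-1) ^ m := by
      rw [show p + (p + m) = 2 * p + m by ring, pow_add, pow_mul]
      norm_num
    rw [hsign, mul_assoc, ht]
    ring
  rw [Finset.sum_congr rfl hterm, ← Finset.mul_sum, gc_alt]
  congr 1
  have hflip : (((k - p : ℕ) : ℚ)) - 1 - (x - p - 1) = (k : ℚ) - x := by
    push_cast [Nat.cast_sub hp]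
    ring
  rw [← hflip, gc_reflect]

noncomputable def W1 (k : ℕ) : Matrix (Fin (k + 2)) (Fin (k + 2)) ℚ := fun p j =>
  if (p : ℕ) ≤ k then
    (if (j : ℕ) ≤ k then (-1) ^ ((p : ℕ) + (j : ℕ)) * (((j : ℕ).choose p : ℕ) : ℚ) else 0)
  else (if (j : ℕ) ≤ k then 0 else 1)

noncomputable def W2 (k : ℕ) (a c : ℚ) : Matrix (Fin (k + 2)) (Fin (k + 2)) ℚ := fun j i =>
  if (j : ℕ) ≤ k then (if (i : ℕ) ≤ (j : ℕ) then gchoose a ((j : ℕ) - (i : ℕ)) else 0)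
  else gchoose c (k + 1 - (i : ℕ))

noncomputable def Vm (k : ℕ) : Matrix (Fin (k + 2)) (Fin (k + 2)) ℚ := fun i q =>
  gchoose (((q : ℕ) : ℚ)) (i : ℕ)

lemma det_W1 (k : ℕ) : (W1 k).det = 1 := by
  rw [Matrix.det_of_upperTriangular]
  · refine Finset.prod_eq_one fun p _ => ?_
    by_cases hp : (p : ℕ) ≤ k
    · simp only [W1, hp, if_true, Nat.choose_self, Nat.cast_one, mul_one,
        ← two_mul, pow_mul]
      norm_num
    · simp [W1, hp]
  · intro i j hij
    by_cases hi : (i : ℕ) ≤ k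
    · have hj : (j : ℕ) ≤ k := le_trans (le_of_lt (by exact_mod_cast hij)) hi
      simp [W1, hi, hj, Nat.choose_eq_zero_of_lt (show (j:ℕ) < (i:ℕ) from hij)]
    · have hj : (j : ℕ) ≤ k := by have := j.isLt; have := i.isLt; have : (j:ℕ) < (i:ℕ) := hij; omega
      simp [W1, hi, hj]

lemma det_W2 (k : ℕ) (a c : ℚ) : (W2 k a c).det = 1 := by
  rw [Matrix.det_of_lowerTriangular]
  · refine Finset.prod_eq_one fun j _ => ?_
    by_cases hj : (j : ℕ) ≤ k
    · simp [W2, hj, gc_zero]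
    · have : (j : ℕ) = k + 1 := by have := j.isLt; omega
      simp [W2, hj, this, gc_zero]
  · intro i j hij
    have hij' : (i : ℕ) < (j : ℕ) := hij
    by_cases hi : (i : ℕ) ≤ k
    · simp [W2, hi, not_le.mpr hij']
    · have := j.isLt; omega
      
lemma det_Vm (k : ℕ) : (Vm k).det = 1 := by
  rw [Matrix.det_of_upperTriangular]
  · refine Finset.prod_eq_one fun i _ => ?_
    simp [Vm, gc_nat, Nat.choose_self]
  · intro i q hiq
    have : (q : ℕ) < (i : ℕ) := hiq
    simp [Vm, gc_nat, Nat.choose_eq_zero_of_lt this]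

lemma W2_mul_Vm (k : ℕ) (a c : ℚ) (j q : Fin (k + 2)) :
    (W2 k a c * Vm k) j q =
      if (j : ℕ) ≤ k then gchoose (((q : ℕ) : ℚ) + a) (j : ℕ)
      else gchoose (((q : ℕ) : ℚ) + c) (k + 1) := by
  rw [Matrix.mul_apply]
  by_cases hj : (j : ℕ) ≤ k
  · simp only [W2, Vm, hj, if_true]
    rw [gc_vandermonde ((q : ℕ) : ℚ) a (j : ℕ)]
    rw [Fin.sum_univ_eq_sum_range
      (fun i => (if i ≤ (j : ℕ) then gchoose a ((j : ℕ) - i) else 0) * gchoose ((q : ℕ) : ℚ) i)]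
    rw [← Finset.sum_subset (Finset.range_subset_range.mpr (show (j : ℕ) + 1 ≤ k + 2 by omega))]
    · refine Finset.sum_congr rfl fun i hi => ?_
      have hi' : i ≤ (j : ℕ) := by have := Finset.mem_range.mp hi; omega
      rw [if_pos hi', mul_comm]
    · intro i _ hi
      have : ¬ i ≤ (j : ℕ) := by have := Finset.mem_range.not.mp hi; omega
      rw [if_neg this, zero_mul]
  · simp only [W2, Vm, hj, if_false]
    rw [gc_vandermonde ((q : ℕ) : ℚ) c (k + 1)]
    rw [Fin.sum_univ_eq_sum_range
      (fun i => gchoose c (k + 1 - i) * gchoose ((q : ℕ) : ℚ) i)]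
    exact Finset.sum_congr rfl fun i _ => mul_comm _ _

lemma matA_factor (k : ℕ) (a b c : ℚ) (hab : a + b = 0) :
    matA k a b c = W1 k * (W2 k a c * Vm k) := by
  have hb : b = -a := by linarith
  ext p q
  rw [Matrix.mul_apply]
  simp only [W2_mul_Vm]
  by_cases hp : (p : ℕ) ≤ k
  · simp only [W1, hp, if_true, matA]
    rw [Fin.sum_univ_eq_sum_range (fun j =>
      (if j ≤ k then (-1) ^ ((p : ℕ) + j) * ((j.choose p : ℕ) : ℚ) else 0) *
      (if j ≤ k then gchoose (((q : ℕ) : ℚ) + a) j else gchoose (((q : ℕ) : ℚ) + c) (k + 1)))]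
    rw [← Finset.sum_subset (Finset.range_subset_range.mpr (show k + 1 ≤ k + 2 by omega))]
    · rw [show ∑ j ∈ range (k + 1),
          (if j ≤ k then (-1 : ℚ) ^ ((p : ℕ) + j) * ((j.choose p : ℕ) : ℚ) else 0) *
          (if j ≤ k then gchoose (((q : ℕ) : ℚ) + a) j else gchoose (((q : ℕ) : ℚ) + c) (k + 1))
          = ∑ j ∈ range (k + 1),
            (-1 : ℚ) ^ ((p : ℕ) + j) * ((j.choose p : ℕ) : ℚ) * gchoose (((q : ℕ) : ℚ) + a) j
        from Finset.sum_congr rfl fun j hj => by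
          have hj' : j ≤ k := by have := Finset.mem_range.mp hj; omega
          rw [if_pos hj', if_pos hj']]
      rw [gc_key (((q : ℕ) : ℚ) + a) hp]
      congr 2
      rw [hb]; ring
    · intro j _ hj
      have : ¬ j ≤ k := by have := Finset.mem_range.not.mp hj; omega
      rw [if_neg this, zero_mul]
  · simp only [W1, hp, if_false, matA]
    rw [Finset.sum_eq_single_of_mem (Fin.last (k + 1)) (Finset.mem_univ _)]
    · have hlast : ¬ ((Fin.last (k + 1) : Fin (k + 2)) : ℕ) ≤ k := by simp [Fin.last]
      rw [if_neg hlast, if_neg hlast, one_mul]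
    · intro j _ hjne
      have hj : (j : ℕ) ≤ k := by
        have := j.isLt
        have : (j : ℕ) ≠ k + 1 := fun h => hjne (by ext; simp [Fin.last, h])
        omega
      rw [if_pos hj, zero_mul]

/-- When `a + b = 0`, the determinant of `A^k(a,b,c)` over `ℚ` is `1`;
in particular the matrix is invertible. -/
theorem det_matA_eq_one_of_add_eq_zero (k : ℕ) (a b c : ℚ) (hab : a + b = 0) :
    (matA k a b c).det = 1 ∧ IsUnit (matA k a b c) := by
  have hdet : (matA k a b c).det = 1 := by
    rw [matA_factor k a b c hab, Matrix.det_mul, Matrix.det_mul, det_W1, det_W2, det_Vm]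
    ring
  exact ⟨hdet, (Matrix.isUnit_iff_isUnit_det _).mpr (hdet ▸ isUnit_one)⟩
end
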